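/- arXiv:1507.07072 — 5 statements merged into one kernel-verified Lean document; each statement's English description precedes it below -/
import Mathlib

section
/- Let H be a d-dimensional complex Hilbert space (d ≥ 1), {φ_j}_{j=1}^d an orthonormal basis of H, and η_1,…,η_d positive reals with Σ_j η_j² = 1. Let α > 0 and let L_1,…,L_{d²} be linear operators on H satisfying ⟨L_a, L_{a'}⟩_Sc = α·δ_{aa'} for all a, a' ∈ {1,…,d²}. Then Σ_{a=1}^{d²} L_a† L_a = Σ_{j=1}^d (α/η_j²) |φ_j⟩⟨φ_j|. -/
/-- The rank-one operator `|u⟩⟨v| : w ↦ ⟨v, w⟩ • u` (inner product conjugate-linear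
in the first argument). -/
noncomputable def rankOne {H : Type*} [NormedAddCommGroup H] [InnerProductSpace ℂ H]
    (u v : H) : H →ₗ[ℂ] H where
  toFun w := (inner ℂ v w : ℂ) • u
  map_add' x y := by simp [inner_add_right, add_smul]
  map_smul' c x := by simp [inner_smul_right, smul_smul]

/-- Lemma 1 of the paper (general form): if `L_1, …, L_{d²}` are operators on a
`d`-dimensional complex Hilbert space `H` that are orthogonal with squared norm `α`
for the inner product `⟨A,B⟩_Sc := d ∑_j η_j² ⟨φ_j, A†B φ_j⟩` determined by the
orthonormal basis `{φ_j}` and the positive weights `η_j` with `∑_j η_j² = 1`, then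
`∑_a L_a† L_a = ∑_j (α/η_j²) |φ_j⟩⟨φ_j|`. -/
theorem sum_adjoint_comp_of_Sc_orthogonal
    {H : Type*} [NormedAddCommGroup H] [InnerProductSpace ℂ H] [FiniteDimensional ℂ H]
    (d : ℕ) (hd : 1 ≤ d) (hdim : Module.finrank ℂ H = d)
    (φ : OrthonormalBasis (Fin d) ℂ H)
    (η : Fin d → ℝ) (hη : ∀ j, 0 < η j) (hη1 : ∑ j, η j ^ 2 = 1)
    (α : ℝ) (hα : 0 < α)
    (L : Fin (d ^ 2) → (H →ₗ[ℂ] H))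
    (horth : ∀ a a' : Fin (d ^ 2),
      (d : ℂ) * ∑ j, ((η j ^ 2 : ℝ) : ℂ) *
        (inner ℂ (φ j) ((LinearMap.adjoint (L a) ∘ₗ L a') (φ j)) : ℂ)
      = if a = a' then (α : ℂ) else 0) :
    ∑ a, LinearMap.adjoint (L a) ∘ₗ L a
      = ∑ j, ((α / η j ^ 2 : ℝ) : ℂ) • rankOne (φ j) (φ j) := by
  classical
  have hα' : (α : ℂ) ≠ 0 := by exact_mod_cast hα.ne'
  have hda : (0:ℝ) < (d:ℝ) / α := div_pos (by exact_mod_cast hd) hα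
  -- normalization constants
  set c : Fin d → ℝ := fun j => Real.sqrt ((d:ℝ) / α) * η j with hcdef
  have hc0 : ∀ j, c j ≠ 0 := fun j =>
    mul_ne_zero (Real.sqrt_pos.2 hda).ne' (hη j).ne'
  have hc0' : ∀ j, ((c j : ℝ) : ℂ) ≠ 0 := fun j => by exact_mod_cast hc0 j
  have hcsq : ∀ j, (c j)^2 = d * (η j)^2 / α := by
    intro j
    rw [hcdef]
    simp only
    rw [mul_pow, Real.sq_sqrt hda.le]
    ring
  -- the vectors
  set v : Fin (d ^ 2) → EuclideanSpace ℂ (Fin d × Fin d) :=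
    fun a => WithLp.toLp 2 (fun p : Fin d × Fin d => (c p.2 : ℂ) * inner ℂ (φ p.1) (L a (φ p.2))) with hvdef
  have hinner : ∀ a b : Fin (d^2),
      (inner ℂ (v a) (v b) : ℂ) = if a = b then 1 else 0 := by
    intro a b
    have step : (inner ℂ (v a) (v b) : ℂ)
        = ∑ j, (((c j)^2 : ℝ) : ℂ) * inner ℂ (φ j) ((LinearMap.adjoint (L a) ∘ₗ L b) (φ j)) := by
      rw [PiLp.inner_apply, Fintype.sum_prod_type, Finset.sum_comm]
      refine Finset.sum_congr rfl fun j _ => ?_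
      have h1 : ∀ k : Fin d, (inner ℂ (v a (k, j)) (v b (k, j)) : ℂ)
          = (((c j)^2 : ℝ) : ℂ) * ((inner ℂ (L a (φ j)) (φ k) : ℂ) * inner ℂ (φ k) (L b (φ j))) := by
        intro k
        rw [hvdef]
        simp only [RCLike.inner_apply, map_mul, Complex.conj_ofReal, inner_conj_symm]
        push_cast
        ring
      rw [Finset.sum_congr rfl fun k _ => h1 k, ← Finset.mul_sum,
        φ.sum_inner_mul_inner, LinearMap.comp_apply, LinearMap.adjoint_inner_right]
    rw [step]
    have h2 : ∀ j : Fin d, (((c j)^2 : ℝ) : ℂ) = (α : ℂ)⁻¹ * ((d : ℂ) * ((η j ^2 : ℝ) : ℂ)) := by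
      intro j
      rw [hcsq j]
      push_cast
      field_simp
    rw [Finset.sum_congr rfl fun j _ => by rw [h2 j]]
    simp_rw [mul_assoc]
    rw [← Finset.mul_sum, ← Finset.mul_sum, horth a b]
    split
    · field_simp
    · simp
  have honv : Orthonormal ℂ v := orthonormal_iff_ite.2 hinner
  -- build an orthonormal basis out of v
  have hcard : Fintype.card (Fin (d^2)) = Module.finrank ℂ (EuclideanSpace ℂ (Fin d × Fin d)) := by
    simp [finrank_euclideanSpace, pow_two]
  haveI : Nonempty (Fin (d^2)) := ⟨⟨0, by positivity⟩⟩
  let B : Module.Basis (Fin (d^2)) ℂ (EuclideanSpace ℂ (Fin d × Fin d)) :=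
    basisOfOrthonormalOfCardEqFinrank honv hcard
  have hBcoe : ⇑B = v := coe_basisOfOrthonormalOfCardEqFinrank honv hcard
  have honB : Orthonormal ℂ B := by rw [hBcoe]; exact honv
  let ob : OrthonormalBasis (Fin (d^2)) ℂ (EuclideanSpace ℂ (Fin d × Fin d)) :=
    B.toOrthonormalBasis honB
  have hob : ⇑ob = v := by
    rw [show ⇑ob = ⇑B from Module.Basis.coe_toOrthonormalBasis B honB, hBcoe]
  -- completeness identity
  have complete : ∀ x y : EuclideanSpace ℂ (Fin d × Fin d),
      ∑ a, (inner ℂ x (v a) : ℂ) * inner ℂ (v a) y = inner ℂ x y := by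
    intro x y
    rw [← hob]
    exact ob.sum_inner_mul_inner x y
  -- standard basis vectors
  set e : Fin d → Fin d → EuclideanSpace ℂ (Fin d × Fin d) :=
    fun k j => EuclideanSpace.single (k, j) (1:ℂ) with hedef
  -- now prove the operator identity entrywise
  refine φ.toBasis.ext fun j => ?_
  refine InnerProductSpace.ext_inner_left_basis φ.toBasis fun i => ?_
  have hone : ∀ (i j : Fin d), (inner ℂ (φ i) (φ j) : ℂ) = if i = j then 1 else 0 :=
    orthonormal_iff_ite.1 φ.orthonormal
  rw [OrthonormalBasis.coe_toBasis]
  -- LHS computation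
  have key2 : ∀ a, ((c i : ℝ) : ℂ) * ((c j : ℝ) : ℂ) * (inner ℂ (L a (φ i)) (L a (φ j)) : ℂ)
      = ∑ k, (inner ℂ (e k j) (v a) : ℂ) * inner ℂ (v a) (e k i) := by
    intro a
    have h3 : ∀ k : Fin d, (inner ℂ (e k j) (v a) : ℂ) * inner ℂ (v a) (e k i)
        = ((c i : ℝ) : ℂ) * ((c j : ℝ) : ℂ)
          * ((inner ℂ (L a (φ i)) (φ k) : ℂ) * inner ℂ (φ k) (L a (φ j))) := by
      intro k
      rw [hedef]
      simp only [EuclideanSpace.inner_single_left, EuclideanSpace.inner_single_right, map_one,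
        one_mul, mul_one]
      rw [hvdef]
      simp only [map_mul, Complex.conj_ofReal, inner_conj_symm]
      ring
    rw [Finset.sum_congr rfl fun k _ => h3 k, ← Finset.mul_sum, φ.sum_inner_mul_inner]
  have lhs : (inner ℂ (φ i) ((∑ a, LinearMap.adjoint (L a) ∘ₗ L a) (φ j)) : ℂ)
      = (((c i : ℝ) : ℂ) * ((c j : ℝ) : ℂ))⁻¹ * ((d : ℂ) * if i = j then 1 else 0) := by
    have h4 : ((c i : ℝ) : ℂ) * ((c j : ℝ) : ℂ)
          * (inner ℂ (φ i) ((∑ a, LinearMap.adjoint (L a) ∘ₗ L a) (φ j)) : ℂ)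
        = (d : ℂ) * if i = j then 1 else 0 := by
      rw [LinearMap.sum_apply, inner_sum]
      simp only [LinearMap.comp_apply, LinearMap.adjoint_inner_right]
      rw [Finset.mul_sum, Finset.sum_congr rfl fun a _ => key2 a, Finset.sum_comm]
      rw [Finset.sum_congr rfl fun k _ => complete (e k j) (e k i)]
      have h5 : ∀ k : Fin d, (inner ℂ (e k j) (e k i) : ℂ) = if i = j then 1 else 0 := by
        intro k
        rw [hedef]
        simp only [EuclideanSpace.inner_single_left, EuclideanSpace.inner_single_right, map_one,
          one_mul, mul_one, EuclideanSpace.single_apply]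
        by_cases h : i = j
        · subst h; simp
        · have h' : ¬ j = i := fun hh => h hh.symm
          simp [h, h']
      rw [Finset.sum_congr rfl fun k _ => h5 k, Finset.sum_const, Finset.card_univ]
      simp [mul_comm]
    have hne : ((c i : ℝ) : ℂ) * ((c j : ℝ) : ℂ) ≠ 0 := mul_ne_zero (hc0' i) (hc0' j)
    rw [← h4, inv_mul_cancel_left₀ hne]
  rw [lhs]
  -- RHS computation
  have rhs : (inner ℂ (φ i) ((∑ j', ((α / η j' ^ 2 : ℝ) : ℂ) • rankOne (φ j') (φ j')) (φ j)) : ℂ)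
      = ((α / η j ^ 2 : ℝ) : ℂ) * if i = j then 1 else 0 := by
    rw [LinearMap.sum_apply, inner_sum]
    have h6 : ∀ j' : Fin d,
        (inner ℂ (φ i) ((((α / η j' ^ 2 : ℝ) : ℂ) • rankOne (φ j') (φ j')) (φ j)) : ℂ)
        = ((α / η j' ^ 2 : ℝ) : ℂ) * ((if j' = j then 1 else 0) * if i = j' then 1 else 0) := by
      intro j'
      rw [LinearMap.smul_apply, inner_smul_right]
      show ((α / η j' ^ 2 : ℝ) : ℂ) * (inner ℂ (φ i) ((inner ℂ (φ j') (φ j) : ℂ) • φ j') : ℂ) = _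
      rw [inner_smul_right, hone, hone]
    rw [Finset.sum_congr rfl fun j' _ => h6 j']
    by_cases h : i = j
    · subst h
      rw [Finset.sum_eq_single i]
      · simp
      · intro b _ hb; simp [hb]
      · simp
    · rw [Finset.sum_eq_zero]
      · simp [h]
      · intro b _
        by_cases hb : b = j
        · subst hb; simp [h]
        · simp [hb]
  rw [rhs]
  -- final numeric identity
  by_cases h : i = j
  · subst h
    simp only [if_pos rfl, mul_one]
    rw [← Complex.ofReal_mul, ← pow_two, hcsq i]
    have hη2 : ((η i ^ 2 : ℝ) : ℂ) ≠ 0 := by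
      exact_mod_cast (pow_ne_zero 2 (hη i).ne')
    have hd0 : (d : ℂ) ≠ 0 := by exact_mod_cast (Nat.one_le_iff_ne_zero.1 hd)
    push_cast
    field_simp
  · simp [h]
end

section
/- Let H be a d-dimensional complex Hilbert space (d ≥ 1) and α > 0. If L_1,…,L_{d²} are linear operators on H satisfying tr(L_a† L_{a'}) = α·δ_{aa'} for all a, a' ∈ {1,…,d²} (i.e., they form an orthogonal family of size d² for the Hilbert–Schmidt inner product, each of squared norm α), then Σ_{a=1}^{d²} L_a† L_a = α·d·𝕀, where 𝕀 is the identity operator on H. -/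
open Matrix

private lemma matrix_key {d : ℕ} (hd : 1 ≤ d) (α : ℝ) (hα : 0 < α)
    (M : Fin (d ^ 2) → Matrix (Fin d) (Fin d) ℂ)
    (h : ∀ a a' : Fin (d ^ 2),
      ((M a)ᴴ * M a').trace = if a = a' then (α : ℂ) else 0) :
    ∑ a, (M a)ᴴ * M a = ((α * d : ℝ) : ℂ) • 1 := by
  have hα0 : (α : ℂ) ≠ 0 := by exact_mod_cast hα.ne'
  -- linear independence
  have hli : LinearIndependent ℂ M := by
    rw [Fintype.linearIndependent_iff]
    intro g hg b
    have := congrArg (fun X => ((M b)ᴴ * X).trace) hg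
    simp only [Matrix.mul_sum, Matrix.mul_smul, Matrix.trace_sum, Matrix.trace_smul,
      Matrix.mul_zero, Matrix.trace_zero, smul_eq_mul, h] at this
    rw [Finset.sum_eq_single b (by intro a _ hab; simp [if_neg (Ne.symm hab)]) (by simp)] at this
    simp only [if_pos rfl] at this
    exact (mul_eq_zero.mp this).resolve_right hα0
  have : Nonempty (Fin (d ^ 2)) := ⟨⟨0, by positivity⟩⟩
  have hcard : Fintype.card (Fin (d ^ 2)) = Module.finrank ℂ (Matrix (Fin d) (Fin d) ℂ) := by
    simp [Module.finrank_matrix, pow_two]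
  let B := basisOfLinearIndependentOfCardEqFinrank hli hcard
  have hB : ⇑B = M := coe_basisOfLinearIndependentOfCardEqFinrank hli hcard
  -- completeness relation
  have hcomp : ∀ X : Matrix (Fin d) (Fin d) ℂ,
      ∑ a, ((M a)ᴴ * X).trace • M a = (α : ℂ) • X := by
    have hlin : (∑ a, (Matrix.traceLinearMap (Fin d) ℂ ℂ ∘ₗ
          LinearMap.mulLeft ℂ ((M a)ᴴ)).smulRight (M a))
        = (α : ℂ) • (LinearMap.id : Matrix (Fin d) (Fin d) ℂ →ₗ[ℂ] _) := by
      apply Module.Basis.ext B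
      intro b
      simp only [hB, LinearMap.sum_apply, LinearMap.smulRight_apply, LinearMap.comp_apply,
        Matrix.traceLinearMap_apply, LinearMap.mulLeft_apply, LinearMap.smul_apply,
        LinearMap.id_apply, h]
      rw [Finset.sum_eq_single b (by intro a _ hab; simp [if_neg hab]) (by simp)]
      simp
    intro X
    have := LinearMap.congr_fun hlin X
    simpa using this
  -- extract entrywise completeness
  have hent : ∀ i j k l : Fin d,
      ∑ a, star (M a i j) * M a k l
        = (α : ℂ) * (if k = i ∧ l = j then 1 else 0) := by
    intro i j k l
    have htr : ∀ a : Fin (d ^ 2), ((M a)ᴴ * Matrix.single i j 1).trace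
        = star (M a i j) := by
      intro a
      simp [Matrix.trace, Matrix.diag, Matrix.mul_apply, Matrix.single,
        Matrix.conjTranspose_apply, ite_and]
    have := congrFun (congrFun (hcomp (Matrix.single i j 1)) k) l
    simp only [Matrix.sum_apply, Matrix.smul_apply, smul_eq_mul, htr] at this
    rw [this]
    by_cases hk : k = i <;> by_cases hl : l = j <;>
      simp [Matrix.single, hk, hl] <;> tauto
  -- conclude entrywise
  ext j l
  simp only [Matrix.sum_apply, Matrix.mul_apply, Matrix.conjTranspose_apply,
    Matrix.smul_apply, Matrix.one_apply, smul_eq_mul]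
  rw [Finset.sum_comm]
  have key : ∀ i : Fin d, ∑ a, star (M a i j) * M a i l
      = (α : ℂ) * (if j = l then 1 else 0) := by
    intro i
    rw [hent i j i l]
    by_cases hjl : j = l <;> simp [hjl, eq_comm]
  rw [Finset.sum_congr rfl fun i _ => key i]
  simp only [Finset.sum_const, Finset.card_univ, Fintype.card_fin, nsmul_eq_mul]
  by_cases hjl : j = l
  · subst hjl; simp; ring
  · simp [hjl]

/-- Lemma 1 of the paper (maximally entangled case): if `L_1, …, L_{d²}` are linear
operators on a `d`-dimensional complex Hilbert space forming an orthogonal family of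
size `d²` for the Hilbert–Schmidt inner product `⟨A,B⟩_HS = tr(A†B)`, each of squared
norm `α > 0`, then `∑_a L_a† L_a = α d 𝕀`. -/
theorem sum_adjoint_comp_of_HS_orthogonal
    {H : Type*} [NormedAddCommGroup H] [InnerProductSpace ℂ H] [FiniteDimensional ℂ H]
    (d : ℕ) (hd : 1 ≤ d) (hdim : Module.finrank ℂ H = d)
    (α : ℝ) (hα : 0 < α)
    (L : Fin (d ^ 2) → (H →ₗ[ℂ] H))
    (horth : ∀ a a' : Fin (d ^ 2),
      LinearMap.trace ℂ H (LinearMap.adjoint (L a) ∘ₗ L a')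
        = if a = a' then (α : ℂ) else 0) :
    ∑ a, LinearMap.adjoint (L a) ∘ₗ L a = ((α * d : ℝ) : ℂ) • LinearMap.id := by
  subst hdim
  let b : OrthonormalBasis (Fin (Module.finrank ℂ H)) ℂ H := stdOrthonormalBasis ℂ H
  let M : Fin (Module.finrank ℂ H ^ 2) → Matrix (Fin (Module.finrank ℂ H)) (Fin (Module.finrank ℂ H)) ℂ :=
    fun a => LinearMap.toMatrix b.toBasis b.toBasis (L a)
  have hM : ∀ a a' : Fin (Module.finrank ℂ H ^ 2),
      ((M a)ᴴ * M a').trace = if a = a' then (α : ℂ) else 0 := by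
    intro a a'
    rw [← horth a a', LinearMap.trace_eq_matrix_trace ℂ b.toBasis]
    congr 1
    show _ = LinearMap.toMatrix b.toBasis b.toBasis (LinearMap.adjoint (L a) ∘ₗ L a')
    rw [LinearMap.toMatrix_comp b.toBasis b.toBasis b.toBasis, LinearMap.toMatrix_adjoint b b (L a)]
  have key := matrix_key hd α hα M hM
  apply (LinearMap.toMatrix b.toBasis b.toBasis).injective
  rw [map_sum, _root_.map_smul, LinearMap.toMatrix_id, ← key]
  refine Finset.sum_congr rfl fun a _ => ?_
  rw [LinearMap.toMatrix_comp b.toBasis b.toBasis b.toBasis, LinearMap.toMatrix_adjoint b b (L a)]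
end

section
/- Let H_A and H_K be finite-dimensional complex Hilbert spaces, C a subspace of H_A ⊗ H_K with orthogonal projection P onto C, and L_1,…,L_l linear operators on H_K satisfying P(𝕀_A ⊗ L_a)†(𝕀_A ⊗ L_{a'})P = λ_a δ_{aa'} P for some reals λ_a ≥ 0 and all a, a'. Let M and M' be linear operators on H_K and X, X' ⊆ {1,…,l} disjoint sets such that (𝕀_A ⊗ M)v = Σ_{a ∈ X} f_a (𝕀_A ⊗ L_a)v and (𝕀_A ⊗ M')v = Σ_{a ∈ X'} f'_a (𝕀_A ⊗ L_a)v for all v ∈ C, with f_a, f'_a ∈ ℂ. Then the post-measurement subspaces are orthogonal: ⟨(𝕀_A ⊗ M)v, (𝕀_A ⊗ M')w⟩ = 0 for all v, w ∈ C. -/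
/-- The operator `𝕀_A ⊗ L` on `H_A ⊗ H_K ≅ ℂ^(dA × dK)`, acting as the identity on the
first tensor factor and as the matrix `L` on the second. -/
noncomputable def idTensorK {dA dK : ℕ} (L : Matrix (Fin dK) (Fin dK) ℂ) :
    EuclideanSpace ℂ (Fin dA × Fin dK) →ₗ[ℂ] EuclideanSpace ℂ (Fin dA × Fin dK) :=
  Matrix.toEuclideanLin (Matrix.of fun p q : Fin dA × Fin dK =>
    (if p.1 = q.1 then (1 : ℂ) else 0) * L p.2 q.2)

/-- The orthogonal projection of `H_A ⊗ H_K` onto the subspace `C`, as an operator on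
the whole space. -/
noncomputable def projOnto {dA dK : ℕ} (C : Submodule ℂ (EuclideanSpace ℂ (Fin dA × Fin dK))) :
    EuclideanSpace ℂ (Fin dA × Fin dK) →ₗ[ℂ] EuclideanSpace ℂ (Fin dA × Fin dK) :=
  C.subtype ∘ₗ (C.orthogonalProjectionOnto : _ →L[ℂ] C).toLinearMap

/-- Theorem 2 of the paper (orthogonality of post-measurement subspaces): under the
orthogonality condition (c3) `P (𝕀_A ⊗ L_a)† (𝕀_A ⊗ L_{a'}) P = λ_a δ_{aa'} P` on the
code `C`, if two measurement operators `M, M'` decompose on `C` over disjoint index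
sets `X, X'` (conditions (c1) and (c2)), then `⟨(𝕀_A ⊗ M) v, (𝕀_A ⊗ M') w⟩ = 0` for
all `v, w ∈ C`. -/
theorem post_measurement_subspaces_orthogonal
    (dA dK l : ℕ)
    (C : Submodule ℂ (EuclideanSpace ℂ (Fin dA × Fin dK)))
    (L : Fin l → Matrix (Fin dK) (Fin dK) ℂ)
    (lam : Fin l → ℝ) (hlam : ∀ a, 0 ≤ lam a)
    (horth : ∀ a a' : Fin l,
      projOnto C ∘ₗ LinearMap.adjoint (idTensorK (dA := dA) (L a)) ∘ₗ
          idTensorK (dA := dA) (L a') ∘ₗ projOnto C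
        = if a = a' then ((lam a : ℝ) : ℂ) • projOnto C else 0)
    (M M' : Matrix (Fin dK) (Fin dK) ℂ)
    (X X' : Finset (Fin l)) (hXX' : X ∩ X' = ∅)
    (f f' : Fin l → ℂ)
    (hdec : ∀ v ∈ C, idTensorK (dA := dA) M v = ∑ a ∈ X, f a • idTensorK (dA := dA) (L a) v)
    (hdec' : ∀ v ∈ C, idTensorK (dA := dA) M' v = ∑ a ∈ X', f' a • idTensorK (dA := dA) (L a) v) :
    ∀ v ∈ C, ∀ w ∈ C,
      (inner ℂ (idTensorK (dA := dA) M v) (idTensorK (dA := dA) M' w) : ℂ) = 0 := by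
  intro v hv w hw
  have hP : ∀ x ∈ C, projOnto C x = x := by
    intro x hx
    simp [projOnto, Submodule.starProjection_eq_self_iff.2 hx,
      Submodule.orthogonalProjectionOnto_mem_subspace_eq_self (K := C) ⟨x, hx⟩]
  have key : ∀ a ∈ X, ∀ a' ∈ X',
      (inner ℂ (idTensorK (dA := dA) (L a) v) (idTensorK (dA := dA) (L a') w) : ℂ) = 0 := by
    intro a ha a' ha'
    have hne : a ≠ a' := by
      intro h; subst h
      have : a ∈ X ∩ X' := Finset.mem_inter.2 ⟨ha, ha'⟩
      simp [hXX'] at this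
    have h0 := horth a a'
    rw [if_neg hne] at h0
    have h1 : projOnto C (LinearMap.adjoint (idTensorK (dA := dA) (L a))
        (idTensorK (dA := dA) (L a') w)) = 0 := by
      have := congrArg (fun T => T w) h0
      simpa [LinearMap.comp_apply, hP w hw] using this
    calc (inner ℂ (idTensorK (dA := dA) (L a) v) (idTensorK (dA := dA) (L a') w) : ℂ)
        = inner ℂ v (LinearMap.adjoint (idTensorK (dA := dA) (L a))
            (idTensorK (dA := dA) (L a') w)) := by
          rw [LinearMap.adjoint_inner_right]
      _ = inner ℂ ((C.orthogonalProjectionOnto v : EuclideanSpace ℂ (Fin dA × Fin dK)))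
            (LinearMap.adjoint (idTensorK (dA := dA) (L a))
              (idTensorK (dA := dA) (L a') w)) := by
          rw [← Submodule.starProjection_apply, Submodule.starProjection_eq_self_iff.2 hv]
      _ = inner ℂ v (projOnto C (LinearMap.adjoint (idTensorK (dA := dA) (L a))
            (idTensorK (dA := dA) (L a') w))) := by
          rw [← Submodule.starProjection_apply, Submodule.inner_starProjection_left_eq_right]; rfl
      _ = 0 := by rw [h1, inner_zero_right]
  rw [hdec v hv, hdec' w hw, sum_inner]
  refine Finset.sum_eq_zero fun a ha => ?_
  rw [inner_sum]
  refine Finset.sum_eq_zero fun a' ha' => ?_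
  rw [inner_smul_left, inner_smul_right, key a ha a' ha']
  ring
end

section
/- Let H be a d-dimensional complex Hilbert space with orthonormal basis {φ_j}_{j=1}^d, η_1,…,η_d positive reals with Σ_j η_j² = 1, and set α := min_j η_j². If L_1,…,L_{d²} are linear operators on H satisfying ⟨L_a, L_{a'}⟩_Sc = α·δ_{aa'} for all a, a', then Σ_{a=1}^{d²} L_a† L_a ≤ 𝕀 in the positive semidefinite (Loewner) order; moreover, if η_j = 1/√d for all j (so α = 1/d), then Σ_{a=1}^{d²} L_a† L_a = 𝕀, i.e., (L_a)_a is a trace-preserving quantum operation. -/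
open scoped ComplexOrder

/-- Application of Lemma 1 in the proof of Theorem 3: if `L_1, …, L_{d²}` are
operators on a `d`-dimensional complex Hilbert space that are orthogonal with squared
norm `α := min_j η_j²` for the inner product `⟨A,B⟩_Sc = d ∑_j η_j² ⟨φ_j, A†B φ_j⟩`,
then `∑_a L_a† L_a ≤ 𝕀` in the Loewner order; and if moreover `η_j = 1/√d` for all
`j` (maximally entangled case, `α = 1/d`), then `∑_a L_a† L_a = 𝕀`, i.e. `(L_a)_a` is
a trace-preserving quantum operation. -/
theorem sum_adjoint_comp_le_one_of_Sc_orthogonal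
    {H : Type*} [NormedAddCommGroup H] [InnerProductSpace ℂ H] [FiniteDimensional ℂ H]
    (d : ℕ) (hd : 1 ≤ d) (hdim : Module.finrank ℂ H = d)
    (φ : OrthonormalBasis (Fin d) ℂ H)
    (η : Fin d → ℝ) (hη : ∀ j, 0 < η j) (hη1 : ∑ j, η j ^ 2 = 1)
    (α : ℝ) (hα : α = ⨅ j, η j ^ 2)
    (L : Fin (d ^ 2) → (H →ₗ[ℂ] H))
    (horth : ∀ a a' : Fin (d ^ 2),
      (d : ℂ) * ∑ j, ((η j ^ 2 : ℝ) : ℂ) *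
        (inner ℂ (φ j) ((LinearMap.adjoint (L a) ∘ₗ L a') (φ j)) : ℂ)
      = if a = a' then (α : ℂ) else 0) :
    (∀ v : H,
      0 ≤ (inner ℂ v (v - (∑ a, LinearMap.adjoint (L a) ∘ₗ L a) v) : ℂ)) ∧
    ((∀ j, η j = 1 / Real.sqrt d) →
      ∑ a, LinearMap.adjoint (L a) ∘ₗ L a = LinearMap.id) := by
  classical
  haveI hne : Nonempty (Fin d) := ⟨⟨0, hd⟩⟩
  have hdpos : 0 < d := hd
  haveI : Nonempty (Fin (d ^ 2)) := ⟨⟨0, by positivity⟩⟩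
  have hηsq : ∀ j, (0 : ℝ) < η j ^ 2 := fun j => by have := hη j; positivity
  have hαle : ∀ j, α ≤ η j ^ 2 := fun j =>
    hα ▸ ciInf_le (Set.Finite.bddBelow (Set.finite_range _)) j
  have hαpos : 0 < α := by
    obtain ⟨j, hj⟩ := exists_eq_ciInf_of_finite (f := fun j => η j ^ 2)
    rw [hα, ← hj]; exact hηsq j
  have hα0 : (α : ℂ) ≠ 0 := by
    exact_mod_cast (Complex.ofReal_ne_zero).mpr hαpos.ne'
  have hd0 : ((d : ℕ) : ℂ) ≠ 0 := Nat.cast_ne_zero.mpr hdpos.ne'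
  have hη0 : ∀ j, ((η j ^ 2 : ℝ) : ℂ) ≠ 0 := fun j =>
    Complex.ofReal_ne_zero.mpr (hηsq j).ne'
  -- the sesquilinear form
  set S : (H →ₗ[ℂ] H) → (H →ₗ[ℂ] H) → ℂ :=
    fun A B => (d : ℂ) * ∑ j, ((η j ^ 2 : ℝ) : ℂ) * (inner ℂ (A (φ j)) (B (φ j)) : ℂ)
    with hSdef
  have horth' : ∀ a a', S (L a) (L a') = if a = a' then (α : ℂ) else 0 := by
    intro a a'
    rw [hSdef]
    simp only
    rw [← horth a a']
    congr 1
    refine Finset.sum_congr rfl fun j _ => ?_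
    rw [LinearMap.comp_apply, LinearMap.adjoint_inner_right]
  have hS_right : ∀ (A : H →ₗ[ℂ] H) (y : Fin (d ^ 2) → ℂ),
      S A (∑ a, y a • L a) = ∑ a, y a * S A (L a) := by
    intro A y
    simp only [hSdef, LinearMap.sum_apply, LinearMap.smul_apply, inner_sum,
      inner_smul_right, Finset.mul_sum]
    rw [Finset.sum_comm]
    refine Finset.sum_congr rfl fun a _ => ?_
    refine Finset.sum_congr rfl fun j _ => ?_
    ring
  have hS_left : ∀ (x : Fin (d ^ 2) → ℂ) (B : H →ₗ[ℂ] H),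
      S (∑ a, x a • L a) B = ∑ a, (starRingEnd ℂ) (x a) * S (L a) B := by
    intro x B
    simp only [hSdef, LinearMap.sum_apply, LinearMap.smul_apply, sum_inner,
      inner_smul_left, Finset.mul_sum]
    rw [Finset.sum_comm]
    refine Finset.sum_congr rfl fun a _ => ?_
    refine Finset.sum_congr rfl fun j _ => ?_
    ring
  have hS_expand : ∀ x y : Fin (d ^ 2) → ℂ,
      S (∑ a, x a • L a) (∑ a, y a • L a)
        = (α : ℂ) * ∑ a, (starRingEnd ℂ) (x a) * y a := by
    intro x y
    rw [hS_left]
    simp only [hS_right, horth', mul_ite, mul_zero, Finset.sum_ite_eq,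
      Finset.mem_univ, if_true, Finset.mul_sum]
    exact Finset.sum_congr rfl fun a _ => by ring
  -- linear independence and basis
  have hli : LinearIndependent ℂ L := by
    rw [Fintype.linearIndependent_iff]
    intro g hg b
    have h1 : S (L b) (∑ a, g a • L a) = (α : ℂ) * g b := by
      rw [hS_right]
      simp only [horth', mul_ite, mul_zero, Finset.sum_ite_eq, Finset.mem_univ, if_true]
      ring
    rw [hg] at h1
    have h0 : S (L b) (0 : H →ₗ[ℂ] H) = 0 := by simp [hSdef]
    rw [h0] at h1
    exact (mul_eq_zero.mp h1.symm).resolve_left hα0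
  have hcard : Fintype.card (Fin (d ^ 2)) = Module.finrank ℂ (H →ₗ[ℂ] H) := by
    rw [Module.finrank_linearMap, hdim, Fintype.card_fin, sq]
  let b := basisOfLinearIndependentOfCardEqFinrank hli hcard
  have hrep : ∀ X : H →ₗ[ℂ] H, ∃ x : Fin (d ^ 2) → ℂ, X = ∑ a, x a • L a := by
    intro X
    refine ⟨fun a => b.repr X a, ?_⟩
    conv_lhs => rw [← b.sum_repr X]
    refine Finset.sum_congr rfl fun a _ => ?_
    rw [show b a = L a from
      congrFun (coe_basisOfLinearIndependentOfCardEqFinrank hli hcard) a]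
  -- rank one operators
  let R : H → Fin d → (H →ₗ[ℂ] H) := fun v j =>
    { toFun := fun u => (inner ℂ (φ j) u : ℂ) • v
      map_add' := fun u w => by simp [inner_add_right, add_smul]
      map_smul' := fun c u => by simp [inner_smul_right, smul_smul] }
  have hRapply : ∀ v j u, R v j u = (inner ℂ (φ j) u : ℂ) • v := fun _ _ _ => rfl
  have hφ : ∀ j m : Fin d, (inner ℂ (φ j) (φ m) : ℂ) = if j = m then 1 else 0 :=
    orthonormal_iff_ite.mp φ.orthonormal
  have hSLR : ∀ a v j,
      S (L a) (R v j) = (d : ℂ) * ((η j ^ 2 : ℝ) : ℂ) * (inner ℂ (L a (φ j)) v : ℂ) := by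
    intro a v j
    rw [hSdef]
    simp only
    rw [Finset.sum_eq_single j (fun m _ hm => by
      rw [hRapply, hφ, if_neg (fun h => hm h.symm), zero_smul, inner_zero_right, mul_zero])
      (fun h => absurd (Finset.mem_univ j) h)]
    rw [hRapply, hφ, if_pos rfl, one_smul]
    ring
  have hSRR : ∀ v w j k, S (R v j) (R w k)
      = if j = k then (d : ℂ) * ((η j ^ 2 : ℝ) : ℂ) * (inner ℂ v w : ℂ) else 0 := by
    intro v w j k
    rw [hSdef]
    simp only [hRapply, inner_smul_left, inner_smul_right, hφ]
    by_cases hjk : j = k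
    · subst hjk
      rw [if_pos rfl]
      rw [Finset.sum_eq_single j (fun m _ hm => by
        rw [if_neg (fun h => hm h.symm)]; simp)
        (fun h => absurd (Finset.mem_univ j) h)]
      simp only [if_pos rfl, map_one, one_mul]
      try simp
      try ring
    · rw [if_neg hjk]
      rw [Finset.sum_eq_zero, mul_zero]
      intro m _
      rcases eq_or_ne j m with rfl | hjm
      · rw [if_neg (show ¬k = j from fun h => hjk h.symm)]
        simp
      · rw [if_neg hjm]
        simp
  -- Parseval-type identity
  have key : ∀ (v w : H) (j k : Fin d),
      ((d : ℂ) * ((η j ^ 2 : ℝ) : ℂ)) * ((d : ℂ) * ((η k ^ 2 : ℝ) : ℂ)) *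
        ∑ a, (starRingEnd ℂ) (inner ℂ (L a (φ j)) v : ℂ) * (inner ℂ (L a (φ k)) w : ℂ)
      = (α : ℂ) *
        (if j = k then (d : ℂ) * ((η j ^ 2 : ℝ) : ℂ) * (inner ℂ v w : ℂ) else 0) := by
    intro v w j k
    obtain ⟨x, hx⟩ := hrep (R v j)
    obtain ⟨y, hy⟩ := hrep (R w k)
    have hxa : ∀ a, (α : ℂ) * x a
        = (d : ℂ) * ((η j ^ 2 : ℝ) : ℂ) * (inner ℂ (L a (φ j)) v : ℂ) := by
      intro a
      rw [← hSLR a v j, hx, hS_right]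
      simp only [horth', mul_ite, mul_zero, Finset.sum_ite_eq, Finset.mem_univ, if_true]
      ring
    have hya : ∀ a, (α : ℂ) * y a
        = (d : ℂ) * ((η k ^ 2 : ℝ) : ℂ) * (inner ℂ (L a (φ k)) w : ℂ) := by
      intro a
      rw [← hSLR a w k, hy, hS_right]
      simp only [horth', mul_ite, mul_zero, Finset.sum_ite_eq, Finset.mem_univ, if_true]
      ring
    have h1 : S (R v j) (R w k) = (α : ℂ) * ∑ a, (starRingEnd ℂ) (x a) * y a := by
      rw [hx, hy, hS_expand]
    have h2 : (α : ℂ) * ((α : ℂ) * ∑ a, (starRingEnd ℂ) (x a) * y a)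
        = ∑ a, (starRingEnd ℂ) ((α : ℂ) * x a) * ((α : ℂ) * y a) := by
      rw [Finset.mul_sum, Finset.mul_sum]
      refine Finset.sum_congr rfl fun a _ => ?_
      rw [map_mul, Complex.conj_ofReal]
      ring
    calc ((d : ℂ) * ((η j ^ 2 : ℝ) : ℂ)) * ((d : ℂ) * ((η k ^ 2 : ℝ) : ℂ)) *
        ∑ a, (starRingEnd ℂ) (inner ℂ (L a (φ j)) v : ℂ) * (inner ℂ (L a (φ k)) w : ℂ)
        = ∑ a, (starRingEnd ℂ) ((α : ℂ) * x a) * ((α : ℂ) * y a) := by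
          rw [Finset.mul_sum]
          refine Finset.sum_congr rfl fun a _ => ?_
          rw [hxa, hya]
          simp only [map_mul, Complex.conj_ofReal, Complex.conj_natCast]
          ring
      _ = (α : ℂ) * S (R v j) (R w k) := by rw [h1, h2]
      _ = _ := by rw [hSRR]
  -- the Gram matrix of M
  have hGram : ∀ j k : Fin d,
      (∑ a, (inner ℂ (L a (φ k)) (L a (φ j)) : ℂ))
        = if j = k then ((α / η j ^ 2 : ℝ) : ℂ) else 0 := by
    intro j k
    have e1 : ∀ a : Fin (d ^ 2), (inner ℂ (L a (φ k)) (L a (φ j)) : ℂ)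
        = ∑ m, (starRingEnd ℂ) (inner ℂ (L a (φ j)) (φ m) : ℂ)
            * (inner ℂ (L a (φ k)) (φ m) : ℂ) := by
      intro a
      rw [← φ.sum_inner_mul_inner (L a (φ k)) (L a (φ j))]
      refine Finset.sum_congr rfl fun m _ => ?_
      rw [inner_conj_symm]
      ring
    have h2 : ((d : ℂ) * ((η j ^ 2 : ℝ) : ℂ)) * ((d : ℂ) * ((η k ^ 2 : ℝ) : ℂ)) *
        ∑ a, (inner ℂ (L a (φ k)) (L a (φ j)) : ℂ)
        = (α : ℂ) * (if j = k then (d : ℂ) * ((η j ^ 2 : ℝ) : ℂ) * (d : ℂ) else 0) := by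
      calc ((d : ℂ) * ((η j ^ 2 : ℝ) : ℂ)) * ((d : ℂ) * ((η k ^ 2 : ℝ) : ℂ)) *
          ∑ a, (inner ℂ (L a (φ k)) (L a (φ j)) : ℂ)
          = ∑ m, ((d : ℂ) * ((η j ^ 2 : ℝ) : ℂ)) * ((d : ℂ) * ((η k ^ 2 : ℝ) : ℂ)) *
              ∑ a, (starRingEnd ℂ) (inner ℂ (L a (φ j)) (φ m) : ℂ)
                * (inner ℂ (L a (φ k)) (φ m) : ℂ) := by
            simp only [e1, Finset.mul_sum]
            rw [Finset.sum_comm]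
        _ = ∑ m : Fin d, (α : ℂ) *
              (if j = k then (d : ℂ) * ((η j ^ 2 : ℝ) : ℂ) * (inner ℂ (φ m) (φ m) : ℂ)
                else 0) := by
            exact Finset.sum_congr rfl fun m _ => key (φ m) (φ m) j k
        _ = _ := by
            simp only [hφ, if_pos rfl, mul_one]
            rw [Finset.sum_const, Finset.card_univ, Fintype.card_fin, nsmul_eq_mul]
            by_cases hjk : j = k <;> simp [hjk] <;> ring
    have hC : ((d : ℂ) * ((η j ^ 2 : ℝ) : ℂ)) * ((d : ℂ) * ((η k ^ 2 : ℝ) : ℂ)) ≠ 0 :=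
      mul_ne_zero (mul_ne_zero hd0 (hη0 j)) (mul_ne_zero hd0 (hη0 k))
    apply mul_left_cancel₀ hC
    rw [h2]
    by_cases hjk : j = k
    · subst hjk
      rw [if_pos rfl, if_pos rfl]
      have h3 : ((η j : ℝ) : ℂ) ≠ 0 := Complex.ofReal_ne_zero.mpr (hη j).ne'
      push_cast
      field_simp
    · rw [if_neg hjk, if_neg hjk, mul_zero, mul_zero]
  -- action of M on the basis
  set M := ∑ a, LinearMap.adjoint (L a) ∘ₗ L a with hM
  have hMinner : ∀ j k : Fin d, (inner ℂ (φ k) (M (φ j)) : ℂ)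
      = if j = k then ((α / η j ^ 2 : ℝ) : ℂ) else 0 := by
    intro j k
    rw [← hGram j k, hM]
    simp only [LinearMap.sum_apply, inner_sum, LinearMap.comp_apply,
      LinearMap.adjoint_inner_right]
  have hMφ : ∀ j, M (φ j) = ((α / η j ^ 2 : ℝ) : ℂ) • φ j := by
    intro j
    conv_lhs => rw [← φ.sum_repr (M (φ j))]
    simp only [OrthonormalBasis.repr_apply_apply, hMinner]
    simp only [ite_smul, zero_smul]
    rw [Finset.sum_ite_eq]
    simp
  constructor
  · intro v
    have hMv : M v = ∑ k, (((α / η k ^ 2 : ℝ) : ℂ) * (inner ℂ (φ k) v : ℂ)) • φ k := by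
      conv_lhs => rw [← φ.sum_repr v, map_sum]
      refine Finset.sum_congr rfl fun k _ => ?_
      rw [OrthonormalBasis.repr_apply_apply, map_smul, hMφ, smul_smul, mul_comm]
    have e : (inner ℂ v (v - M v) : ℂ)
        = ((∑ k, (1 - α / η k ^ 2) * Complex.normSq (inner ℂ (φ k) v : ℂ) : ℝ) : ℂ) := by
      rw [inner_sub_right, hMv, inner_sum]
      conv_lhs => rw [← φ.sum_inner_mul_inner v v]
      push_cast
      rw [← Finset.sum_sub_distrib]
      refine Finset.sum_congr rfl fun k _ => ?_
      rw [inner_smul_right,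
        show (inner ℂ v (φ k) : ℂ) = (starRingEnd ℂ) (inner ℂ (φ k) v : ℂ) from
          (inner_conj_symm _ _).symm]
      push_cast
      linear_combination (1 - (α : ℂ) * (((η k : ℝ) : ℂ))⁻¹ ^ 2) *
        Complex.mul_conj (inner ℂ (φ k) v : ℂ)
    rw [e, Complex.zero_le_real]
    refine Finset.sum_nonneg fun k _ => mul_nonneg ?_ (Complex.normSq_nonneg _)
    have h1 : α / η k ^ 2 ≤ 1 := (div_le_one (hηsq k)).mpr (hαle k)
    linarith
  · intro hu
    have hηd : ∀ j, η j ^ 2 = 1 / d := by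
      intro j
      rw [hu j, div_pow, one_pow, Real.sq_sqrt (Nat.cast_nonneg d)]
    have hαd : α = 1 / d := by
      rw [hα]
      simp only [hηd]
      exact ciInf_const
    refine φ.toBasis.ext fun j => ?_
    rw [OrthonormalBasis.coe_toBasis, LinearMap.id_apply, hMφ]
    have : α / η j ^ 2 = 1 := by
      rw [hαd, hηd j]
      have : (0 : ℝ) < (d : ℝ) := by exact_mod_cast hdpos
      field_simp
    rw [this]
    simp
end

section
/- On ℂ², let |0⟩ := (1,0)ᵀ, |1⟩ := (0,1)ᵀ, |+⟩ := (1/√2)(1,1)ᵀ, |−⟩ := (1/√2)(1,−1)ᵀ, and set X₀ := |+⟩⟨+|, X₁ := |−⟩⟨−|, Z₀ := |0⟩⟨0|, Z₁ := |1⟩⟨1|. Define L̂₁ := X₀Z₀, L̂₂ := X₁Z₀, L̂₃ := X₀Z₁, L̂₄ := X₁Z₁. Then: (a) Σ_{a=1}^4 L̂_a† L̂_a = 𝕀; (b) tr(L̂_a† L̂_{a'}) = (1/2)·δ_{aa'} for all a, a' ∈ {1,2,3,4}; and (c) X₀ = L̂₁ + L̂₃, X₁ = L̂₂ + L̂₄,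 Z₀ = L̂₁ + L̂₂, Z₁ = L̂₃ + L̂₄. -/
open scoped Matrix

namespace MeanKingQubit

/-- The rank-one matrix `|u⟩⟨v| = u vᴴ`. -/
noncomputable def ketbra {n : ℕ} (u v : Fin n → ℂ) : Matrix (Fin n) (Fin n) ℂ :=
  Matrix.of fun i j => u i * star (v j)

noncomputable def ket0 : Fin 2 → ℂ := ![1, 0]
noncomputable def ket1 : Fin 2 → ℂ := ![0, 1]
noncomputable def ketPlus : Fin 2 → ℂ :=
  ![((1 / Real.sqrt 2 : ℝ) : ℂ), ((1 / Real.sqrt 2 : ℝ) : ℂ)]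
noncomputable def ketMinus : Fin 2 → ℂ :=
  ![((1 / Real.sqrt 2 : ℝ) : ℂ), -((1 / Real.sqrt 2 : ℝ) : ℂ)]

/-- `X₀ = |+⟩⟨+|`, eigenprojector of `σ_x`. -/
noncomputable def X0 : Matrix (Fin 2) (Fin 2) ℂ := ketbra ketPlus ketPlus
/-- `X₁ = |−⟩⟨−|`, eigenprojector of `σ_x`. -/
noncomputable def X1 : Matrix (Fin 2) (Fin 2) ℂ := ketbra ketMinus ketMinus
/-- `Z₀ = |0⟩⟨0|`, eigenprojector of `σ_z`. -/
noncomputable def Z0 : Matrix (Fin 2) (Fin 2) ℂ := ketbra ket0 ket0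
/-- `Z₁ = |1⟩⟨1|`, eigenprojector of `σ_z`. -/
noncomputable def Z1 : Matrix (Fin 2) (Fin 2) ℂ := ketbra ket1 ket1

/-- The error operators `L̂₁ = X₀Z₀`, `L̂₂ = X₁Z₀`, `L̂₃ = X₀Z₁`, `L̂₄ = X₁Z₁`. -/
noncomputable def Lhat : Fin 4 → Matrix (Fin 2) (Fin 2) ℂ :=
  ![X0 * Z0, X1 * Z0, X0 * Z1, X1 * Z1]


lemma key : ((Real.sqrt 2 : ℝ) : ℂ)⁻¹ * ((Real.sqrt 2 : ℝ) : ℂ)⁻¹ = 1 / 2 := by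
  rw [← mul_inv, ← Complex.ofReal_mul, Real.mul_self_sqrt (by norm_num)]
  norm_num

lemma L0eq : Lhat 0 = Matrix.of ![![(1/2:ℂ), 0], ![1/2, 0]] := by
  ext i j
  fin_cases i <;> fin_cases j <;>
    simp [Lhat, X0, Z0, ketbra, ketPlus, ket0, Matrix.mul_apply, Fin.sum_univ_succ, key]

lemma L1eq : Lhat 1 = Matrix.of ![![(1/2:ℂ), 0], ![-(1/2), 0]] := by
  ext i j
  fin_cases i <;> fin_cases j <;>
    simp [Lhat, X1, Z0, ketbra, ketMinus, ket0, Matrix.mul_apply, Fin.sum_univ_succ, key]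

lemma L2eq : Lhat 2 = Matrix.of ![![(0:ℂ), 1/2], ![0, 1/2]] := by
  ext i j
  fin_cases i <;> fin_cases j <;>
    simp [Lhat, X0, Z1, ketbra, ketPlus, ket1, Matrix.mul_apply, Fin.sum_univ_succ, key]

lemma L3eq : Lhat 3 = Matrix.of ![![(0:ℂ), -(1/2)], ![0, 1/2]] := by
  ext i j
  fin_cases i <;> fin_cases j <;>
    simp [Lhat, X1, Z1, ketbra, ketMinus, ket1, Matrix.mul_apply, Fin.sum_univ_succ, key]

/-- Section VI of the paper (the qubit example): the operators `L̂_a` satisfy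
(a) the completeness relation `∑_a L̂_a† L̂_a = 𝕀`, (b) the Hilbert–Schmidt
orthogonality `tr(L̂_a† L̂_{a'}) = (1/2) δ_{aa'}`, and (c) the decompositions
`X₀ = L̂₁ + L̂₃`, `X₁ = L̂₂ + L̂₄`, `Z₀ = L̂₁ + L̂₂`, `Z₁ = L̂₃ + L̂₄` of the
projective measurements `(X₀, X₁)` and `(Z₀, Z₁)`. -/
theorem qubit_error_operators :
    (∑ a, (Lhat a)ᴴ * Lhat a = 1) ∧
    (∀ a a' : Fin 4,
      ((Lhat a)ᴴ * Lhat a').trace = if a = a' then ((1 / 2 : ℝ) : ℂ) else 0) ∧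
    (X0 = Lhat 0 + Lhat 2 ∧ X1 = Lhat 1 + Lhat 3 ∧
      Z0 = Lhat 0 + Lhat 1 ∧ Z1 = Lhat 2 + Lhat 3) := by
  refine ⟨?_, ?_, ?_, ?_, ?_, ?_⟩
  · rw [Fin.sum_univ_four, L0eq, L1eq, L2eq, L3eq]
    ext i j
    fin_cases i <;> fin_cases j <;>
      simp [Matrix.mul_apply, Matrix.conjTranspose_apply, Fin.sum_univ_succ,
        Matrix.one_apply, map_ofNat] <;> norm_num
  · intro a a'
    fin_cases a <;> fin_cases a' <;>
      simp [L0eq, L1eq, L2eq, L3eq, Matrix.trace, Matrix.diag, Matrix.mul_apply,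
        Matrix.conjTranspose_apply, Fin.sum_univ_succ, map_ofNat] <;> norm_num
  · rw [L0eq, L2eq]
    ext i j
    fin_cases i <;> fin_cases j <;>
      simp [X0, ketbra, ketPlus, key]
  · rw [L1eq, L3eq]
    ext i j
    fin_cases i <;> fin_cases j <;>
      simp [X1, ketbra, ketMinus, key] <;> norm_num
  · rw [L0eq, L1eq]
    ext i j
    fin_cases i <;> fin_cases j <;>
      simp [Z0, ketbra, ket0] <;> norm_num
  · rw [L2eq, L3eq]
    ext i j
    fin_cases i <;> fin_cases j <;>
      simp [Z1, ketbra, ket1] <;> norm_num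

end MeanKingQubit
end
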